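/- Let a and b be coprime nonzero integers and let d > 1 be an odd integer with gcd(d, ab) = 1. Then d ∈ EG_{(a,b)} if and only if there exists an integer s ≥ 2 such that 2^s || ord_p(a/b) for every prime p dividing d. -/

import Mathlib

/-- `d ∈ EG_{(a,b)}`: `d` divides `a^k + b^k` for some even integer `k ≥ 2`. -/
def EvenlyGood (a b : ℤ) (d : ℕ) : Prop :=
  ∃ k : ℕ, Even k ∧ 2 ≤ k ∧ (d : ℤ) ∣ a ^ k + b ^ k

/-- `ord_n(a/b)`: the multiplicative order of `a·b⁻¹` modulo `n`. -/
noncomputable def ordAB (a b : ℤ) (n : ℕ) : ℕ :=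
  orderOf ((a : ZMod n) * (b : ZMod n)⁻¹)

lemma EG.isUnit_cast {n : ℕ} {b : ℤ} (h : IsCoprime (n : ℤ) b) : IsUnit ((b : ZMod n)) := by
  obtain ⟨u, v, huv⟩ := h
  have : ((u * n + v * b : ℤ) : ZMod n) = 1 := by rw [huv]; simp
  push_cast at this
  simp only [ZMod.natCast_self, mul_zero, zero_add] at this
  exact ⟨⟨_, _, by rw [mul_comm] at this; exact this, this⟩, rfl⟩

lemma EG.ord_dvd_iff {a b : ℤ} {n : ℕ} [NeZero n] (hbn : IsCoprime (n : ℤ) b) (m : ℕ) :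
    ordAB a b n ∣ m ↔ (n : ℤ) ∣ a ^ m - b ^ m := by
  obtain ⟨u, hu'⟩ := EG.isUnit_cast hbn
  rw [ordAB, orderOf_dvd_iff_pow_eq_one]
  have hiff : ((a : ZMod n) * (b : ZMod n)⁻¹) ^ m = 1 ↔ (a : ZMod n) ^ m = (b : ZMod n) ^ m := by
    rw [← hu', ZMod.inv_coe_unit, mul_pow, ← Units.val_pow_eq_pow_val, inv_pow,
      Units.mul_inv_eq_one, Units.val_pow_eq_pow_val]
  rw [hiff]
  constructor
  · intro h
    have : ((a ^ m - b ^ m : ℤ) : ZMod n) = 0 := by push_cast; rw [h]; ring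
    exact (ZMod.intCast_zmod_eq_zero_iff_dvd _ _).mp this
  · intro h
    have h2 : ((a ^ m - b ^ m : ℤ) : ZMod n) = 0 := (ZMod.intCast_zmod_eq_zero_iff_dvd _ _).mpr h
    push_cast at h2
    linear_combination h2

lemma EG.ord_pos {a b : ℤ} {n : ℕ} [NeZero n] (han : IsCoprime (n : ℤ) a)
    (hbn : IsCoprime (n : ℤ) b) : 0 < ordAB a b n := by
  have hu : IsUnit ((a : ZMod n) * (b : ZMod n)⁻¹) := by
    refine (EG.isUnit_cast han).mul ?_
    obtain ⟨u, hu'⟩ := EG.isUnit_cast hbn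
    rw [← hu', ZMod.inv_coe_unit]
    exact Units.isUnit _
  obtain ⟨u, hu'⟩ := hu
  rw [ordAB, ← hu', orderOf_units]
  exact orderOf_pos u

lemma EG.lift_step {p : ℕ} (hp : p.Prime) {X Y : ℤ} {j : ℕ} (hj : 1 ≤ j)
    (h : (p : ℤ) ^ j ∣ X - Y) : (p : ℤ) ^ (j + 1) ∣ X ^ p - Y ^ p := by
  have hsum : (p : ℤ) ∣ ∑ i ∈ Finset.range p, X ^ i * Y ^ (p - 1 - i) := by
    rw [← ZMod.intCast_zmod_eq_zero_iff_dvd]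
    have hXY : (X : ZMod p) = (Y : ZMod p) := by
      have : (p : ℤ) ∣ X - Y := dvd_trans (dvd_pow_self _ (by omega)) h
      have h0 : ((X - Y : ℤ) : ZMod p) = 0 := (ZMod.intCast_zmod_eq_zero_iff_dvd _ _).mpr this
      push_cast at h0
      linear_combination h0
    push_cast
    calc (∑ i ∈ Finset.range p, (X : ZMod p) ^ i * (Y : ZMod p) ^ (p - 1 - i))
        = ∑ i ∈ Finset.range p, (Y : ZMod p) ^ (p - 1) := by
          apply Finset.sum_congr rfl
          intro i hi
          rw [Finset.mem_range] at hi
          rw [hXY, ← pow_add]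
          congr 1
          omega
      _ = p * (Y : ZMod p) ^ (p - 1) := by
          rw [Finset.sum_const, Finset.card_range, nsmul_eq_mul]
      _ = 0 := by simp
  have hgeom : (∑ i ∈ Finset.range p, X ^ i * Y ^ (p - 1 - i)) * (X - Y) = X ^ p - Y ^ p :=
    geom_sum₂_mul X Y p
  rw [← hgeom, pow_succ, mul_comm ((p : ℤ) ^ j)]
  exact mul_dvd_mul hsum h

lemma EG.lift_full {p : ℕ} (hp : p.Prime) {a b : ℤ} {m e : ℕ} (he : 1 ≤ e)
    (h : (p : ℤ) ∣ a ^ m - b ^ m) :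
    (p : ℤ) ^ e ∣ a ^ (m * p ^ (e - 1)) - b ^ (m * p ^ (e - 1)) := by
  induction e with
  | zero => omega
  | succ e ih =>
    rcases Nat.eq_or_lt_of_le he with he1 | he2
    · obtain rfl : e = 0 := by omega
      simpa using h
    · have he' : 1 ≤ e := by omega
      have ihe := ih he'
      have := EG.lift_step hp he' ihe
      rw [← pow_mul, ← pow_mul, mul_assoc, ← pow_succ] at this
      have hee : e - 1 + 1 = (e + 1) - 1 := by omega
      rwa [hee] at this

lemma EG.sq_diff (a b : ℤ) (k : ℕ) :
    a ^ (2 * k) - b ^ (2 * k) = (a ^ k - b ^ k) * (a ^ k + b ^ k) := by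
  rw [mul_comm 2 k, pow_mul, pow_mul]; ring

section
variable {a b : ℤ} {p : ℕ} (hp : p.Prime) (hodd : p ≠ 2)
  (hpa : IsCoprime (p : ℤ) a) (hpb : IsCoprime (p : ℤ) b)

include hp hodd hpa in
lemma EG.not_dvd_sub_of_dvd_add {k : ℕ} (h : (p : ℤ) ∣ a ^ k + b ^ k) :
    ¬ (p : ℤ) ∣ a ^ k - b ^ k := by
  intro h2
  have hP : Prime (p : ℤ) := Nat.prime_iff_prime_int.mp hp
  have h3 : (p : ℤ) ∣ 2 * a ^ k := by
    have := dvd_add h h2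
    rwa [show a ^ k + b ^ k + (a ^ k - b ^ k) = 2 * a ^ k by ring] at this
  rcases hP.dvd_mul.mp h3 with h4 | h4
  · have : (p : ℕ) ∣ 2 := by exact_mod_cast h4
    exact hodd ((Nat.prime_dvd_prime_iff_eq hp Nat.prime_two).mp this)
  · exact hP.not_unit (hpa.isUnit_of_dvd' dvd_rfl (hP.dvd_of_dvd_pow h4))

include hp hodd hpa hpb in
lemma EG.dvd_add_iff {k : ℕ} :
    (p : ℤ) ∣ a ^ k + b ^ k ↔ (ordAB a b p ∣ 2 * k ∧ ¬ ordAB a b p ∣ k) := by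
  have : NeZero p := ⟨hp.pos.ne'⟩
  have hP : Prime (p : ℤ) := Nat.prime_iff_prime_int.mp hp
  constructor
  · intro h
    constructor
    · rw [EG.ord_dvd_iff hpb, EG.sq_diff]
      exact Dvd.dvd.mul_left h _
    · rw [EG.ord_dvd_iff hpb]
      exact EG.not_dvd_sub_of_dvd_add hp hodd hpa h
  · rintro ⟨h1, h2⟩
    rw [EG.ord_dvd_iff hpb] at h1 h2
    rw [EG.sq_diff] at h1
    rcases hP.dvd_mul.mp h1 with h | h
    · exact absurd h h2
    · exact h

include hp hodd hpa in
lemma EG.prime_pow_dvd_add {k e : ℕ} (h1 : (p : ℤ) ^ e ∣ a ^ (2 * k) - b ^ (2 * k))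
    (h2 : (p : ℤ) ∣ a ^ k + b ^ k) : (p : ℤ) ^ e ∣ a ^ k + b ^ k := by
  have hP : Prime (p : ℤ) := Nat.prime_iff_prime_int.mp hp
  have hcop : IsCoprime ((p : ℤ) ^ e) (a ^ k - b ^ k) :=
    (hP.coprime_iff_not_dvd.mpr (EG.not_dvd_sub_of_dvd_add hp hodd hpa h2)).pow_left
  rw [EG.sq_diff] at h1
  exact hcop.dvd_of_dvd_mul_left h1

end

lemma EG.v2_lemma {t k : ℕ} (hk : k ≠ 0) (h1 : t ∣ 2 * k) (h2 : ¬ t ∣ k) :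
    2 ^ (padicValNat 2 k + 1) ∣ t ∧ ¬ 2 ^ (padicValNat 2 k + 2) ∣ t := by
  have : Fact (Nat.Prime 2) := ⟨Nat.prime_two⟩
  have ht0 : t ≠ 0 := by rintro rfl; rw [zero_dvd_iff] at h1; omega
  have h2k : 2 * k ≠ 0 := by positivity
  have hv2k : padicValNat 2 (2 * k) = 1 + padicValNat 2 k := by
    rw [padicValNat.mul (by norm_num) hk, padicValNat.self (by norm_num)]
  constructor
  · rw [padicValNat_dvd_iff_le ht0]
    by_contra hle
    push_neg at hle
    have hα : padicValNat 2 t ≤ padicValNat 2 k := by omega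
    set u := ordCompl[2] t with hu
    have hcu : Nat.Coprime u 2 := (Nat.coprime_ordCompl Nat.prime_two ht0).symm
    have hudvd : u ∣ k := by
      exact hcu.dvd_of_dvd_mul_left ((Nat.ordCompl_dvd t 2).trans h1)
    have hpk : 2 ^ padicValNat 2 t ∣ k := by
      calc 2 ^ padicValNat 2 t ∣ 2 ^ padicValNat 2 k := pow_dvd_pow _ hα
        _ ∣ k := by rw [padicValNat_dvd_iff_le hk]
    have : t ∣ k := by
      have hts : 2 ^ (t.factorization 2) * u = t := Nat.ordProj_mul_ordCompl_eq_self t 2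
      rw [Nat.factorization_def t Nat.prime_two] at hts
      rw [← hts]
      exact Nat.Coprime.mul_dvd_of_dvd_of_dvd
        ((Nat.coprime_ordCompl Nat.prime_two ht0).pow_left _) hpk hudvd
    exact h2 this
  · intro hbad
    have := (padicValNat_dvd_iff_le h2k).mp (hbad.trans h1)
    omega

theorem evenlyGood_iff (a b : ℤ) (ha : a ≠ 0) (hb : b ≠ 0) (hab : IsCoprime a b)
    (d : ℕ) (hd : 1 < d) (hdodd : Odd d) (hdab : IsCoprime (d : ℤ) (a * b)) :
    EvenlyGood a b d ↔ ∃ s : ℕ, 2 ≤ s ∧ ∀ p : ℕ, p.Prime → p ∣ d →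
      2 ^ s ∣ ordAB a b p ∧ ¬ 2 ^ (s + 1) ∣ ordAB a b p := by
  have : Fact (Nat.Prime 2) := ⟨Nat.prime_two⟩
  have hd0 : d ≠ 0 := by omega
  have : NeZero d := ⟨hd0⟩
  have hda : IsCoprime (d : ℤ) a := hdab.of_mul_right_left
  have hdb : IsCoprime (d : ℤ) b := hdab.of_mul_right_right
  -- facts about primes dividing d
  have hpfacts : ∀ p : ℕ, p.Prime → p ∣ d →
      p ≠ 2 ∧ IsCoprime (p : ℤ) a ∧ IsCoprime (p : ℤ) b := by
    intro p hp hpd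
    have hp2 : p ≠ 2 := by
      rintro rfl
      rw [Nat.odd_iff] at hdodd
      omega
    have hpab : IsCoprime (p : ℤ) (a * b) :=
      hdab.of_isCoprime_of_dvd_left (Int.natCast_dvd_natCast.mpr hpd)
    exact ⟨hp2, hpab.of_mul_right_left, hpab.of_mul_right_right⟩
  constructor
  · rintro ⟨k, hkeven, hk2, hdvd⟩
    have hk0 : k ≠ 0 := by omega
    refine ⟨padicValNat 2 k + 1, ?_, ?_⟩
    · have : 2 ^ 1 ∣ k := by simpa using hkeven.two_dvd
      rw [padicValNat_dvd_iff_le hk0] at this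
      omega
    · intro p hp hpd
      obtain ⟨hp2, hpa, hpb⟩ := hpfacts p hp hpd
      have h : (p : ℤ) ∣ a ^ k + b ^ k :=
        dvd_trans (Int.natCast_dvd_natCast.mpr hpd) hdvd
      obtain ⟨h1, h2⟩ := (EG.dvd_add_iff hp hp2 hpa hpb).mp h
      have := EG.v2_lemma hk0 h1 h2
      constructor
      · exact this.1
      · have heq : padicValNat 2 k + 1 + 1 = padicValNat 2 k + 2 := by omega
        rw [heq]
        exact this.2
  · rintro ⟨s, hs2, H⟩
    set T := ordAB a b d with hT
    have hTpos : 0 < T := EG.ord_pos hda hdb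
    set c := ordCompl[2] T with hc
    have hcpos : 0 < c := Nat.ordCompl_pos 2 hTpos.ne'
    set k := 2 ^ (s - 1) * (c * d ^ d) with hk
    have h2k : 2 * k = 2 ^ s * (c * d ^ d) := by
      rw [hk, ← mul_assoc, ← pow_succ']
      congr 2
      omega
    have hkeven : Even k := by
      rw [hk]
      exact Even.mul_right (Nat.even_pow.mpr ⟨even_two, by omega⟩) _
    have hk2 : 2 ≤ k := by
      calc (2 : ℕ) = 2 ^ 1 * 1 := by norm_num
        _ ≤ 2 ^ (s - 1) * (c * d ^ d) := by
            apply Nat.mul_le_mul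
            · exact Nat.pow_le_pow_right (by norm_num) (by omega)
            · have : 0 < d ^ d := pow_pos (by omega) d
              exact Nat.one_le_iff_ne_zero.mpr (by positivity)
    have hk0 : k ≠ 0 := by omega
    refine ⟨k, hkeven, hk2, ?_⟩
    -- positivity of a^k + b^k
    have hapos : 0 ≤ a ^ k := hkeven.pow_nonneg a
    have hbpos : 0 < b ^ k := hkeven.pow_pos hb
    have hsumpos : 0 < a ^ k + b ^ k := by linarith
    set N := (a ^ k + b ^ k).natAbs with hN
    have hN0 : N ≠ 0 := by
      rw [hN]
      simpa using hsumpos.ne'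
    rw [← Int.dvd_natAbs, ← hN, Int.natCast_dvd_natCast]
    rw [← Nat.factorization_le_iff_dvd hd0 hN0, Finsupp.le_def]
    intro p
    by_cases hpe : d.factorization p = 0
    · simp [hpe]
    set e := d.factorization p with he
    have hesupp : p ∈ d.factorization.support := by
      rw [Finsupp.mem_support_iff]; exact hpe
    have hp : p.Prime := Nat.prime_of_mem_primeFactors (Nat.support_factorization d ▸ hesupp)
    have hpd : p ∣ d := Nat.dvd_of_mem_primeFactors (Nat.support_factorization d ▸ hesupp)
    have hpe_dvd : p ^ e ∣ d := Nat.ordProj_dvd d p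
    have he1 : 1 ≤ e := by omega
    obtain ⟨hp2, hpa, hpb⟩ := hpfacts p hp hpd
    have hppos : NeZero p := ⟨hp.pos.ne'⟩
    obtain ⟨hs, hs'⟩ := H p hp hpd
    set t := ordAB a b p with ht
    have htT : t ∣ T := by
      rw [ht, EG.ord_dvd_iff hpb]
      exact dvd_trans (Int.natCast_dvd_natCast.mpr hpd) ((EG.ord_dvd_iff hdb T).mp dvd_rfl)
    have ht0 : t ≠ 0 := by
      intro h
      rw [h] at htT
      omega
    have hvt : padicValNat 2 t = s := by
      have l1 := (padicValNat_dvd_iff_le ht0).mp hs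
      have l2 : ¬ s + 1 ≤ padicValNat 2 t := fun h =>
        hs' ((padicValNat_dvd_iff_le ht0).mpr h)
      omega
    -- t ∣ 2^s * c
    have htsc : t ∣ 2 ^ s * c := by
      have hts : 2 ^ s * ordCompl[2] t = t := by
        conv_rhs => rw [← Nat.ordProj_mul_ordCompl_eq_self t 2]
        rw [Nat.factorization_def t Nat.prime_two, hvt]
      rw [← hts]
      exact Nat.mul_dvd_mul_left _ (Nat.ordCompl_dvd_ordCompl_of_dvd htT 2)
    have ht2k : t ∣ 2 * k := by
      rw [h2k]
      calc t ∣ 2 ^ s * c := htsc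
        _ ∣ 2 ^ s * (c * d ^ d) := by
            rw [← mul_assoc]
            exact Dvd.dvd.mul_right dvd_rfl _
    have htk : ¬ t ∣ k := by
      intro hcon
      have h2s : 2 ^ s ∣ k := hs.trans hcon
      rw [hk] at h2s
      have : 2 ^ (s - 1) * 2 ∣ 2 ^ (s - 1) * (c * d ^ d) := by
        rw [← pow_succ]
        have : s - 1 + 1 = s := by omega
        rw [this]
        exact h2s
      have h2cd : 2 ∣ c * d ^ d :=
        (Nat.mul_dvd_mul_iff_left (pow_pos (by norm_num) _)).mp this
      rcases (Nat.prime_two.dvd_mul).mp h2cd with h | h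
      · exact Nat.not_dvd_ordCompl Nat.prime_two hTpos.ne' h
      · have : Odd (d ^ d) := hdodd.pow
        rw [Nat.odd_iff] at this
        omega
    have hpk : (p : ℤ) ∣ a ^ k + b ^ k :=
      (EG.dvd_add_iff hp hp2 hpa hpb).mpr ⟨ht2k, htk⟩
    -- p^e ∣ a^(2k) - b^(2k)
    have hlift : (p : ℤ) ^ e ∣ a ^ (t * p ^ (e - 1)) - b ^ (t * p ^ (e - 1)) :=
      EG.lift_full hp he1 ((EG.ord_dvd_iff hpb t).mp dvd_rfl)
    have hneZpe : NeZero (p ^ e) := ⟨(pow_pos hp.pos e).ne'⟩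
    have hpeb : IsCoprime ((p ^ e : ℕ) : ℤ) b := by
      push_cast
      exact hpb.pow_left
    have hte : ordAB a b (p ^ e) ∣ t * p ^ (e - 1) := by
      rw [EG.ord_dvd_iff hpeb]
      push_cast
      exact hlift
    have hed : e ≤ d := by
      have h1 : p ^ e ≤ d := Nat.le_of_dvd (by omega) hpe_dvd
      have h2 : e < p ^ e := Nat.lt_pow_self hp.one_lt
      omega
    have htpe2k : t * p ^ (e - 1) ∣ 2 * k := by
      rw [h2k, ← mul_assoc]
      exact mul_dvd_mul htsc (dvd_trans (pow_dvd_pow_of_dvd hpd _) (pow_dvd_pow d (by omega)))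
    have hpe2k : (p : ℤ) ^ e ∣ a ^ (2 * k) - b ^ (2 * k) := by
      have := (EG.ord_dvd_iff hpeb (2 * k)).mp (hte.trans htpe2k)
      push_cast at this
      exact this
    have hfinal : (p : ℤ) ^ e ∣ a ^ k + b ^ k :=
      EG.prime_pow_dvd_add hp hp2 hpa hpe2k hpk
    -- conclude factorization bound
    have hnat : p ^ e ∣ N := by
      rw [hN]
      rw [← Int.natCast_dvd_natCast, Int.dvd_natAbs]
      push_cast
      exact hfinal
    exact (Nat.Prime.pow_dvd_iff_le_factorization hp hN0).mp hnat
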